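/- The example set E = (E⁺, E⁻) with E⁺ = {({A,B}), (∅,{A,B})} and E⁻ = {({A},{B},{A},{B},…,{A},{B}) with n alternations} uniquely characterises ◇ᵣ(A ∧ B) within the class of path queries over {○, ◇ᵣ} of size at most n: every path query q' of the form ρ₀ ∧ o₁(ρ₁ ∧ o₂(ρ₂ ∧ … ∧ oₘ ρₘ)) with oᵢ ∈ {○,◇ᵣ}, each ρᵢ a conjunction of atoms over {A,B}, and m < n, that fits E, is equivalent to ◇ᵣ(A ∧ B). -/

import Mathlib

inductive LTL (σ : Type) : Type where
  | atom : σ → LTL σ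
  | top : LTL σ
  | bot : LTL σ
  | and : LTL σ → LTL σ → LTL σ
  | next : LTL σ → LTL σ
  | ev : LTL σ → LTL σ
  | evr : LTL σ → LTL σ
  | untl : LTL σ → LTL σ → LTL σ

/-- Satisfaction of an LTL query at position `ℓ` in a data instance `D`
(a finite word over `2^σ`, implicitly extended by `∅`). -/
def sat {σ : Type} (D : List (Finset σ)) : LTL σ → ℕ → Prop
  | .atom a, ℓ => a ∈ D.getD ℓ ∅
  | .top, _ => True
  | .bot, _ => False
  | .and p q, ℓ => sat D p ℓ ∧ sat D q ℓ
  | .next p, ℓ => sat D p (ℓ + 1)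
  | .ev p, ℓ => ∃ m, ℓ < m ∧ sat D p m
  | .evr p, ℓ => ∃ m, ℓ ≤ m ∧ sat D p m
  | .untl p q, ℓ => ∃ m, ℓ < m ∧ sat D q m ∧ ∀ k, ℓ < k → k < m → sat D p k

def equivQ {σ : Type} (p q : LTL σ) : Prop :=
  ∀ (D : List (Finset σ)) (ℓ : ℕ), sat D p ℓ ↔ sat D q ℓ

def entailsQ {σ : Type} (p q : LTL σ) : Prop :=
  ∀ (D : List (Finset σ)) (ℓ : ℕ), sat D p ℓ → sat D q ℓ

/-- The conjunction of the atoms in `ρ`. -/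
noncomputable def conjF {σ : Type} (ρ : Finset σ) : LTL σ :=
  ρ.toList.foldr (fun a r => (LTL.atom a).and r) LTL.top

/-- Path queries over `{○, ◇ᵣ}`: `ρ₀ ∧ o₁(ρ₁ ∧ o₂(ρ₂ ∧ … ∧ oₘ ρₘ))`, where
`true` codes `○` and `false` codes `◇ᵣ`. -/
noncomputable def pathQ {σ : Type} (ρ : Finset σ) : List (Bool × Finset σ) → LTL σ
  | [] => conjF ρ
  | (o, ρ') :: rest =>
      (conjF ρ).and (if o then LTL.next (pathQ ρ' rest) else LTL.evr (pathQ ρ' rest))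

/-- The query `◇ᵣ(A ∧ B)` over `σ = {A, B}` encoded as `Fin 2` (`A = 0`, `B = 1`). -/
def qAB : LTL (Fin 2) := .evr ((LTL.atom 0).and (.atom 1))

/-- The negative example `({A},{B},…,{A},{B})` with `n` alternations. -/
def altAB (n : ℕ) : List (Finset (Fin 2)) :=
  (List.replicate n [({0} : Finset (Fin 2)), ({1} : Finset (Fin 2))]).flatten

/- ------------------- auxiliary lemmas ------------------- -/

lemma sat_foldr {σ : Type} (D : List (Finset σ)) (l : List σ) (ℓ : ℕ) :
    sat D (l.foldr (fun a r => (LTL.atom a).and r) LTL.top) ℓ ↔ ∀ a ∈ l, a ∈ D.getD ℓ ∅ := by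
  induction l with
  | nil => simp [sat]
  | cons a l ih => simp [sat, ih]

lemma sat_conjF {σ : Type} (D : List (Finset σ)) (ρ : Finset σ) (ℓ : ℕ) :
    sat D (conjF ρ) ℓ ↔ ρ ⊆ D.getD ℓ ∅ := by
  rw [conjF, sat_foldr]
  simp [Finset.subset_iff]

/-- Tautology lemma: if all the conjunctions are empty, the path query holds
anywhere its head holds. -/
lemma sat_pathQ_empty {σ : Type} (D : List (Finset σ)) (R : List (Bool × Finset σ))
    (ρ : Finset σ) (ℓ : ℕ) (hρ : ρ ⊆ D.getD ℓ ∅) (hR : ∀ p ∈ R, p.2 = ∅) :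
    sat D (pathQ ρ R) ℓ := by
  induction R generalizing ρ ℓ with
  | nil => exact (sat_conjF ..).2 hρ
  | cons q R ih =>
    obtain ⟨o, ρ'⟩ := q
    have hρ' : ρ' = ∅ := hR (o, ρ') List.mem_cons_self
    have hR' : ∀ p ∈ R, p.2 = ∅ := fun p hp => hR p (by simp [hp])
    simp only [pathQ, sat]
    refine ⟨(sat_conjF ..).2 hρ, ?_⟩
    cases o with
    | true =>
      rw [if_pos rfl]
      exact ih ρ' (ℓ + 1) (by simp [hρ']) hR'
    | false =>
      rw [if_neg (by simp)]
      exact ⟨ℓ, le_rfl, ih ρ' ℓ (by simp [hρ']) hR'⟩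

lemma sat_pathQ_head {σ : Type} (D : List (Finset σ)) (L : List (Bool × Finset σ))
    (ρ : Finset σ) (ℓ : ℕ) (h : sat D (pathQ ρ L) ℓ) : ρ ⊆ D.getD ℓ ∅ := by
  cases L with
  | nil => exact (sat_conjF ..).1 h
  | cons q R =>
    obtain ⟨o, ρ'⟩ := q
    simp only [pathQ, sat] at h
    exact (sat_conjF ..).1 h.1

/-- Every conjunction of a satisfied path query is realised at some later position. -/
lemma sat_pathQ_mem {σ : Type} (D : List (Finset σ)) (L : List (Bool × Finset σ))
    (ρ : Finset σ) (ℓ : ℕ) (h : sat D (pathQ ρ L) ℓ) :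
    ∀ p ∈ L, ∃ m, ℓ ≤ m ∧ p.2 ⊆ D.getD m ∅ := by
  induction L generalizing ρ ℓ with
  | nil => simp
  | cons q R ih =>
    obtain ⟨o, ρ'⟩ := q
    simp only [pathQ, sat] at h
    obtain ⟨h0, h1⟩ := h
    have hstep : ∃ ℓ', ℓ ≤ ℓ' ∧ sat D (pathQ ρ' R) ℓ' := by
      cases o with
      | true =>
        rw [if_pos rfl] at h1
        exact ⟨ℓ + 1, Nat.le_succ _, h1⟩
      | false =>
        rw [if_neg (by simp)] at h1
        obtain ⟨m, hm, hs⟩ := h1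
        exact ⟨m, hm, hs⟩
    obtain ⟨ℓ', hℓ', hs⟩ := hstep
    intro p hp
    rcases List.mem_cons.1 hp with rfl | hp
    · exact ⟨ℓ', hℓ', sat_pathQ_head _ _ _ _ hs⟩
    · obtain ⟨m, hm, hsub⟩ := ih _ _ hs p hp
      exact ⟨m, le_trans hℓ' hm, hsub⟩

/-- In the instance `[{A,B}]`, at any position `≥ 1`, a satisfied path query must
have all conjunctions empty. -/
lemma sat_D1_pos : ∀ (L : List (Bool × Finset (Fin 2))) (ρ : Finset (Fin 2)) (ℓ : ℕ),
    1 ≤ ℓ → sat [({0, 1} : Finset (Fin 2))] (pathQ ρ L) ℓ →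
    ρ = ∅ ∧ ∀ p ∈ L, p.2 = ∅ := by
  intro L
  induction L with
  | nil =>
    intro ρ ℓ hℓ h
    have hsub := (sat_conjF ..).1 h
    have hget : ([({0, 1} : Finset (Fin 2))]).getD ℓ ∅ = ∅ :=
      List.getD_eq_default _ _ (by simpa using hℓ)
    rw [hget] at hsub
    exact ⟨Finset.subset_empty.1 hsub, by simp⟩
  | cons q R ih =>
    intro ρ ℓ hℓ h
    obtain ⟨o, ρ'⟩ := q
    simp only [pathQ, sat] at h
    obtain ⟨h0, h1⟩ := h
    have hget : ([({0, 1} : Finset (Fin 2))]).getD ℓ ∅ = ∅ :=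
      List.getD_eq_default _ _ (by simpa using hℓ)
    have hρ : ρ = ∅ := Finset.subset_empty.1 (by rw [← hget]; exact (sat_conjF ..).1 h0)
    have hrec : ρ' = ∅ ∧ ∀ p ∈ R, p.2 = ∅ := by
      cases o with
      | true =>
        rw [if_pos rfl] at h1
        exact ih ρ' (ℓ + 1) (by omega) h1
      | false =>
        rw [if_neg (by simp)] at h1
        obtain ⟨m, hm, hs⟩ := h1
        exact ih ρ' m (le_trans hℓ hm) hs
    refine ⟨hρ, ?_⟩
    intro p hp
    rcases List.mem_cons.1 hp with rfl | hp
    · exact hrec.1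
    · exact hrec.2 p hp

/-- Structure extracted from fitting the positive example `[{A,B}]`. -/
lemma sat_D1_zero : ∀ (L : List (Bool × Finset (Fin 2))) (ρ : Finset (Fin 2)),
    sat [({0, 1} : Finset (Fin 2))] (pathQ ρ L) 0 →
    ∃ t, (∀ p ∈ L.take t, p.1 = false) ∧ (∀ p ∈ L.drop t, p.2 = ∅) := by
  intro L
  induction L with
  | nil => exact fun ρ _ => ⟨0, by simp, by simp⟩
  | cons q R ih =>
    intro ρ h
    obtain ⟨o, ρ'⟩ := q
    simp only [pathQ, sat] at h
    obtain ⟨h0, h1⟩ := h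
    cases o with
    | true =>
      rw [if_pos rfl] at h1
      obtain ⟨hρ', hR⟩ := sat_D1_pos R ρ' 1 le_rfl h1
      refine ⟨0, by simp, ?_⟩
      intro p hp
      rcases List.mem_cons.1 (by simpa using hp) with rfl | hp
      · exact hρ'
      · exact hR p hp
    | false =>
      rw [if_neg (by simp)] at h1
      obtain ⟨m, _, hs⟩ := h1
      rcases Nat.eq_zero_or_pos m with rfl | hm
      · obtain ⟨t, ht1, ht2⟩ := ih ρ' hs
        refine ⟨t + 1, ?_, ?_⟩
        · intro p hp
          rcases List.mem_cons.1 (by simpa using hp) with rfl | hp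
          · rfl
          · exact ht1 p hp
        · simpa using ht2
      · obtain ⟨hρ', hR⟩ := sat_D1_pos R ρ' m hm hs
        refine ⟨0, by simp, ?_⟩
        intro p hp
        rcases List.mem_cons.1 (by simpa using hp) with rfl | hp
        · exact hρ'
        · exact hR p hp

lemma fin2_subset (s : Finset (Fin 2)) : s ⊆ ({0, 1} : Finset (Fin 2)) := by
  intro a _
  fin_cases a <;> simp

/-- Backward direction: given the extracted structure, `◇ᵣ(A ∧ B)` entails the query. -/
lemma sat_pathQ_of_struct {D : List (Finset (Fin 2))} {m : ℕ}
    (h0 : (0 : Fin 2) ∈ D.getD m ∅) (h1 : (1 : Fin 2) ∈ D.getD m ∅) :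
    ∀ (L : List (Bool × Finset (Fin 2))) (t : ℕ) (ρ : Finset (Fin 2)) (ℓ : ℕ),
      ℓ ≤ m → ρ ⊆ D.getD ℓ ∅ →
      (∀ p ∈ L.take t, p.1 = false) → (∀ p ∈ L.drop t, p.2 = ∅) →
      sat D (pathQ ρ L) ℓ := by
  have h01 : ({0, 1} : Finset (Fin 2)) ⊆ D.getD m ∅ := by
    intro a ha
    fin_cases a
    · exact h0
    · exact h1
  intro L
  induction L with
  | nil => exact fun t ρ ℓ _ hρ _ _ => (sat_conjF ..).2 hρ
  | cons q R ih =>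
    intro t ρ ℓ hℓm hρ hT hR
    obtain ⟨o, ρ'⟩ := q
    cases t with
    | zero => exact sat_pathQ_empty _ _ _ _ hρ (by simpa using hR)
    | succ t =>
      have ho : o = false := hT (o, ρ') (by simp)
      subst ho
      simp only [pathQ, sat]
      refine ⟨(sat_conjF ..).2 hρ, ?_⟩
      refine ⟨m, hℓm, ih t ρ' m le_rfl (le_trans (fin2_subset ρ') h01) ?_ ?_⟩
      · intro p hp
        exact hT p (by simpa using List.mem_cons_of_mem (false, ρ') hp)
      · intro p hp
        exact hR p (by simpa using hp)

lemma finset_fin2_cases (s : Finset (Fin 2)) :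
    s = ∅ ∨ s = {0} ∨ s = {1} ∨ s = ({0, 1} : Finset (Fin 2)) := by
  by_cases h0 : (0 : Fin 2) ∈ s <;> by_cases h1 : (1 : Fin 2) ∈ s
  · exact Or.inr (Or.inr (Or.inr (by ext a; fin_cases a <;> simp [h0, h1])))
  · exact Or.inr (Or.inl (by ext a; fin_cases a <;> simp [h0, h1]))
  · exact Or.inr (Or.inr (Or.inl (by ext a; fin_cases a <;> simp [h0, h1])))
  · exact Or.inl (by ext a; fin_cases a <;> simp [h0, h1])

lemma altAB_succ (n : ℕ) :
    altAB (n + 1) = ({0} : Finset (Fin 2)) :: ({1} : Finset (Fin 2)) :: altAB n := by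
  simp [altAB, List.replicate_succ]

lemma altAB_getD : ∀ (n j : ℕ), j < 2 * n →
    (altAB n).getD j ∅ = if j % 2 = 0 then ({0} : Finset (Fin 2)) else {1} := by
  intro n
  induction n with
  | zero => omega
  | succ n ih =>
    intro j hj
    rw [altAB_succ]
    match j with
    | 0 => simp
    | 1 => simp
    | (j + 2) =>
      rw [List.getD_cons_succ, List.getD_cons_succ, ih j (by omega)]
      have : (j + 2) % 2 = j % 2 := by omega
      rw [this]

/-- If no conjunction equals `{A,B}`, the query is satisfied on the negative example. -/
lemma sat_altAB (n : ℕ) :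
    ∀ (T : List (Bool × Finset (Fin 2))) (R : List (Bool × Finset (Fin 2)))
      (ρ : Finset (Fin 2)) (c : ℕ),
      (∀ p ∈ T, p.1 = false ∧ p.2 ≠ ({0, 1} : Finset (Fin 2))) →
      (∀ p ∈ R, p.2 = ∅) →
      ρ ⊆ (altAB n).getD c ∅ →
      c + T.length < 2 * n →
      sat (altAB n) (pathQ ρ (T ++ R)) c := by
  intro T
  induction T with
  | nil =>
    intro R ρ c _ hR hρ _
    exact sat_pathQ_empty _ _ _ _ hρ hR
  | cons q T ih =>
    intro R ρ c hT hR hρ hc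
    obtain ⟨o, ρ'⟩ := q
    obtain ⟨ho, hρ'⟩ := hT (o, ρ') List.mem_cons_self
    have hT' : ∀ p ∈ T, p.1 = false ∧ p.2 ≠ ({0, 1} : Finset (Fin 2)) :=
      fun p hp => hT p (by simp [hp])
    simp only at ho
    subst ho
    simp only [List.cons_append, pathQ, sat]
    refine ⟨(sat_conjF ..).2 hρ, ?_⟩
    simp only [List.length_cons] at hc
    rcases finset_fin2_cases ρ' with h | h | h | h
    · exact ⟨c, le_rfl, ih R ρ' c hT' hR (by simp [h]) (by omega)⟩
    · by_cases hpar : c % 2 = 0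
      · refine ⟨c, le_rfl, ih R ρ' c hT' hR ?_ (by omega)⟩
        rw [altAB_getD n c (by omega), if_pos hpar, h]
      · refine ⟨c + 1, Nat.le_succ _, ih R ρ' (c + 1) hT' hR ?_ (by omega)⟩
        rw [altAB_getD n (c + 1) (by omega), if_pos (by omega), h]
    · by_cases hpar : c % 2 = 0
      · refine ⟨c + 1, Nat.le_succ _, ih R ρ' (c + 1) hT' hR ?_ (by omega)⟩
        rw [altAB_getD n (c + 1) (by omega), if_neg (by omega), h]
      · refine ⟨c, le_rfl, ih R ρ' c hT' hR ?_ (by omega)⟩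
        rw [altAB_getD n c (by omega), if_neg hpar, h]
    · exact absurd h hρ'

/-- The example set `E⁺ = {({A,B}), (∅,{A,B})}`,
`E⁻ = {({A},{B},…,{A},{B})}` (with `n` alternations) uniquely characterises
`◇ᵣ(A ∧ B)` within the path queries over `{○, ◇ᵣ}` of size `m < n`. -/
theorem evr_AB_uniquely_characterised_bounded
    (n : ℕ) (ρ₀ : Finset (Fin 2)) (L : List (Bool × Finset (Fin 2)))
    (hsize : L.length < n)
    (h1 : sat [({0, 1} : Finset (Fin 2))] (pathQ ρ₀ L) 0)
    (h2 : sat [(∅ : Finset (Fin 2)), ({0, 1} : Finset (Fin 2))] (pathQ ρ₀ L) 0)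
    (h3 : ¬ sat (altAB n) (pathQ ρ₀ L) 0) :
    equivQ (pathQ ρ₀ L) qAB := by
  have hρ₀ : ρ₀ = ∅ := by
    have hsub := sat_pathQ_head _ _ _ _ h2
    simp only [List.getD] at hsub
    exact Finset.subset_empty.1 (by simpa using hsub)
  obtain ⟨t, hT, hR⟩ := sat_D1_zero L ρ₀ h1
  have hex : ∃ p ∈ L, p.2 = ({0, 1} : Finset (Fin 2)) := by
    by_contra hno
    push_neg at hno
    apply h3
    have hT' : ∀ p ∈ L.take t, p.1 = false ∧ p.2 ≠ ({0, 1} : Finset (Fin 2)) :=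
      fun p hp => ⟨hT p hp, hno p (List.mem_of_mem_take hp)⟩
    have hlen : (L.take t).length ≤ L.length := by
      simp [List.length_take_le]
    have := sat_altAB n (L.take t) (L.drop t) ρ₀ 0 hT' hR (by simp [hρ₀]) (by omega)
    simpa [List.take_append_drop] using this
  intro D ℓ
  constructor
  · intro h
    obtain ⟨p, hp, hp2⟩ := hex
    obtain ⟨m, hm, hsub⟩ := sat_pathQ_mem _ _ _ _ h p hp
    rw [hp2] at hsub
    simp only [qAB, sat]
    exact ⟨m, hm, hsub (by simp), hsub (by simp)⟩
  · intro h
    simp only [qAB, sat] at h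
    obtain ⟨m, hm, hA, hB⟩ := h
    exact sat_pathQ_of_struct hA hB L t ρ₀ ℓ hm (by simp [hρ₀]) hT hR
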